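/- In the bit-gadget graph, for all i, j ∈ {0,…,k−1} with i ≠ j, the hop distance satisfies dist(a^i, b^j) ≤ 3. -/
import Mathlib


/-- Vertices of the bit-gadget graph: `a i`, `b i` for `i < k`, and the
bit-nodes `fA h`, `tA h`, `fB h`, `tB h` for `h < logk`. -/
inductive BGVertex (k logk : ℕ) where
  | a (i : Fin k)
  | b (i : Fin k)
  | fA (h : Fin logk)
  | tA (h : Fin logk)
  | fB (h : Fin logk)
  | tB (h : Fin logk)
deriving DecidableEq

/-- Base relation generating the edges of the bit-gadget graph:
`a i` is adjacent to `fA h` iff the `h`-th bit of `i` is `0`, to `tA h` iff it is `1`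
(so `a i` is adjacent exactly to `bin(a i)`); similarly for `b i`; and the cross
edges `(fA h, tB h)` and `(tA h, fB h)`. -/
def bgRel (k logk : ℕ) : BGVertex k logk → BGVertex k logk → Prop
  | .a i, .fA h => i.val.testBit h.val = false
  | .a i, .tA h => i.val.testBit h.val = true
  | .b i, .fB h => i.val.testBit h.val = false
  | .b i, .tB h => i.val.testBit h.val = true
  | .fA h, .tB h' => h = h'
  | .tA h, .fB h' => h = h'
  | _, _ => False

/-- The bit-gadget graph. -/
def bgGraph (k logk : ℕ) : SimpleGraph (BGVertex k logk) :=
  SimpleGraph.fromRel (bgRel k logk)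

lemma bg_adj {k logk : ℕ} {u v : BGVertex k logk} (hne : u ≠ v)
    (h : bgRel k logk u v) : (bgGraph k logk).Adj u v := by
  exact (SimpleGraph.fromRel_adj _ _ _).mpr ⟨hne, Or.inl h⟩

/-- in the bit-gadget graph (for `k = 2 ^ logk`, `k ≥ 2`),
for all `i ≠ j` the hop distance between `a i` and `b j` is at most `3`. -/
theorem bitGadget_dist_a_b_le_three (k logk : ℕ) (hk : 2 ≤ k) (hpow : k = 2 ^ logk)
    (i j : Fin k) (hij : i ≠ j) :
    (bgGraph k logk).edist (BGVertex.a i) (BGVertex.b j) ≤ 3 := by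
  have hvne : i.val ≠ j.val := fun h => hij (Fin.ext h)
  have hex : ∃ h, i.val.testBit h ≠ j.val.testBit h := by
    by_contra hc
    push_neg at hc
    exact hvne (Nat.eq_of_testBit_eq hc)
  obtain ⟨h, hne⟩ := hex
  have hlt : h < logk := by
    by_contra hge
    push_neg at hge
    have hi : i.val.testBit h = false :=
      Nat.testBit_eq_false_of_lt (lt_of_lt_of_le (hpow ▸ i.isLt)
        (Nat.pow_le_pow_right (by norm_num) hge))
    have hj : j.val.testBit h = false :=
      Nat.testBit_eq_false_of_lt (lt_of_lt_of_le (hpow ▸ j.isLt)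
        (Nat.pow_le_pow_right (by norm_num) hge))
    exact hne (hi.trans hj.symm)
  set hf : Fin logk := ⟨h, hlt⟩
  -- case on bit of i
  cases hbi : i.val.testBit h with
  | false =>
    have hbj : j.val.testBit h = true := by
      cases hbj : j.val.testBit h
      · exact absurd (hbi.trans hbj.symm) hne
      · rfl
    have a1 : (bgGraph k logk).Adj (BGVertex.a i) (BGVertex.fA hf) :=
      bg_adj (by simp) hbi
    have a2 : (bgGraph k logk).Adj (BGVertex.fA hf) (BGVertex.tB hf) :=
      bg_adj (by simp) rfl
    have a3 : (bgGraph k logk).Adj (BGVertex.tB hf) (BGVertex.b j) :=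
      ((bgGraph k logk).adj_symm (bg_adj (by simp) hbj))
    calc (bgGraph k logk).edist (BGVertex.a i) (BGVertex.b j)
        ≤ (SimpleGraph.Walk.cons a1 (SimpleGraph.Walk.cons a2
            (SimpleGraph.Walk.cons a3 SimpleGraph.Walk.nil))).length := by
          exact SimpleGraph.Walk.edist_le _
      _ = 3 := by simp
  | true =>
    have hbj : j.val.testBit h = false := by
      cases hbj : j.val.testBit h
      · rfl
      · exact absurd (hbi.trans hbj.symm) hne
    have a1 : (bgGraph k logk).Adj (BGVertex.a i) (BGVertex.tA hf) :=
      bg_adj (by simp) hbi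
    have a2 : (bgGraph k logk).Adj (BGVertex.tA hf) (BGVertex.fB hf) :=
      bg_adj (by simp) rfl
    have a3 : (bgGraph k logk).Adj (BGVertex.fB hf) (BGVertex.b j) :=
      ((bgGraph k logk).adj_symm (bg_adj (by simp) hbj))
    calc (bgGraph k logk).edist (BGVertex.a i) (BGVertex.b j)
        ≤ (SimpleGraph.Walk.cons a1 (SimpleGraph.Walk.cons a2
            (SimpleGraph.Walk.cons a3 SimpleGraph.Walk.nil))).length := by
          exact SimpleGraph.Walk.edist_le _
      _ = 3 := by simp
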